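/- Let A, V ∈ ℝ^{d×d} with V commuting with Σ₀ ≻ 0 and with M := VA + AᵀVᵀ. If M has a positive eigenvalue, then the solution Σ(t) = (Σ₀⁻¹ − tM)⁻¹ of Σ̇ = VΣAΣ + ΣAᵀΣVᵀ blows up in finite time: there exists T ≤ λ_max(Σ₀⁻¹)/λ_max(M) such that the smallest eigenvalue of Σ₀⁻¹ − tM reaches 0 by time T, so Σ(t) is not defined past T. -/

import Mathlib

open Matrix

/-- If `V` commutes with `Σ₀ ≻ 0` and with `M := VA + AᵀVᵀ`, and `M` has a positive
eigenvalue, then the solution `Σ(t) = (Σ₀⁻¹ − t M)⁻¹` of `Σ̇ = VΣAΣ + ΣAᵀΣVᵀ` blows up in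
finite time: there is `T ≤ λ_max(Σ₀⁻¹)/λ_max(M)` at which `Σ₀⁻¹ − T M` becomes singular. -/
lemma rayleigh_le {d : ℕ} (H : Matrix (Fin d) (Fin d) ℝ) (hH : H.IsHermitian) (x : Fin d → ℝ) :
    x ⬝ᵥ (H *ᵥ x) ≤ (⨆ i, hH.eigenvalues i) * (x ⬝ᵥ x) := by
  rcases Nat.eq_zero_or_pos d with hd | hd
  · subst hd; simp [dotProduct]
  have : Nonempty (Fin d) := ⟨⟨0, hd⟩⟩
  set U : Matrix (Fin d) (Fin d) ℝ := (hH.eigenvectorUnitary : Matrix (Fin d) (Fin d) ℝ) with hU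
  set y : Fin d → ℝ := Uᵀ *ᵥ x with hy
  have hstar : star U = Uᵀ := by
    rw [← conjTranspose_eq_transpose_of_trivial]; rfl
  have hUU : U * Uᵀ = 1 := by
    rw [← hstar]; exact (Matrix.mem_unitaryGroup_iff).mp hH.eigenvectorUnitary.2
  have key : x ⬝ᵥ (H *ᵥ x) = ∑ i, hH.eigenvalues i * (y i)^2 := by
    conv_lhs => rw [hH.spectral_theorem, Unitary.conjStarAlgAut_apply]
    rw [hstar, ← mulVec_mulVec, ← mulVec_mulVec, dotProduct_mulVec, ← mulVec_transpose, ← hy]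
    simp [dotProduct, mulVec_diagonal, Function.comp]
    ring_nf
    apply Finset.sum_congr rfl
    intro i _
    ring
  have hyy : y ⬝ᵥ y = x ⬝ᵥ x := by
    rw [hy, dotProduct_mulVec, ← mulVec_transpose, mulVec_mulVec, transpose_transpose, hUU,
      one_mulVec]
  rw [key, ← hyy]
  have hb : ∀ i, hH.eigenvalues i ≤ ⨆ j, hH.eigenvalues j := fun i =>
    le_ciSup (Set.Finite.bddAbove (Set.finite_range _)) i
  calc ∑ i, hH.eigenvalues i * (y i)^2 ≤ ∑ i, (⨆ j, hH.eigenvalues j) * (y i)^2 := by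
        apply Finset.sum_le_sum
        intro i _
        exact mul_le_mul_of_nonneg_right (hb i) (sq_nonneg _)
    _ = (⨆ j, hH.eigenvalues j) * (y ⬝ᵥ y) := by
        rw [← Finset.mul_sum]; congr 1; simp [dotProduct, sq]

theorem stmt_6 (d : ℕ) (A V S₀ : Matrix (Fin d) (Fin d) ℝ) (hS₀ : S₀.PosDef)
    (M : Matrix (Fin d) (Fin d) ℝ) (hM : M = V * A + (V * A)ᵀ)
    (hMh : M.IsHermitian)
    (hcomm₁ : V * S₀ = S₀ * V) (hcomm₂ : V * M = M * V)
    (hpos : 0 < ⨆ i, hMh.eigenvalues i) :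
    ∃ T : ℝ, 0 ≤ T ∧
      T ≤ (⨆ i, (hS₀.inv.isHermitian).eigenvalues i) / (⨆ i, hMh.eigenvalues i) ∧
      (S₀⁻¹ - T • M).det = 0 := by
  rcases Nat.eq_zero_or_pos d with hd | hd
  · exfalso
    subst hd
    rw [iSup, Set.range_eq_empty, Real.sSup_empty] at hpos
    exact lt_irrefl 0 hpos
  have : Nonempty (Fin d) := ⟨⟨0, hd⟩⟩
  have hSinv : (S₀⁻¹).PosDef := hS₀.inv
  set lS : ℝ := ⨆ i, (hS₀.inv.isHermitian).eigenvalues i with hlS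
  set μ : ℝ := ⨆ i, hMh.eigenvalues i with hμ
  open MatrixOrder in set B : Matrix (Fin d) (Fin d) ℝ := CFC.sqrt S₀⁻¹ with hB
  have hBh : B.IsHermitian := open MatrixOrder in (CFC.sqrt_nonneg S₀⁻¹).posSemidef.1
  have hBB : B * B = S₀⁻¹ := open MatrixOrder in CFC.sqrt_mul_sqrt_self S₀⁻¹ hSinv.posSemidef.nonneg
  have hdetB : IsUnit B.det := by
    have h1 : (0:ℝ) < (S₀⁻¹).det := hSinv.det_pos
    rw [← hBB, det_mul] at h1
    exact isUnit_iff_ne_zero.mpr (fun h => by simp [h] at h1)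
  have hBinv : B * B⁻¹ = 1 := mul_nonsing_inv B hdetB
  have hinvB : B⁻¹ * B = 1 := nonsing_inv_mul B hdetB
  have hBt : Bᵀ = B := by
    have := hBh; rwa [IsHermitian, conjTranspose_eq_transpose_of_trivial] at this
  set N : Matrix (Fin d) (Fin d) ℝ := B⁻¹ * M * B⁻¹ with hN
  have hBinvH : (B⁻¹).IsHermitian := hBh.inv
  have hNh : N.IsHermitian := by
    rw [hN, IsHermitian, conjTranspose_mul, conjTranspose_mul, hBinvH.eq, hMh.eq, mul_assoc]
  set ν : ℝ := ⨆ i, hNh.eigenvalues i with hν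
  -- eigenvector of M for μ
  obtain ⟨i₀, hi₀⟩ := exists_eq_ciSup_of_finite (f := hMh.eigenvalues)
  set u : Fin d → ℝ := ⇑(hMh.eigenvectorBasis i₀) with hu
  have hMu : M *ᵥ u = μ • u := by rw [hMh.mulVec_eigenvectorBasis, hi₀]
  have hune : u ≠ 0 := by
    have := hMh.eigenvectorBasis.orthonormal.ne_zero i₀
    intro h
    apply this
    ext j
    exact congrFun h j
  have huu : u ⬝ᵥ u = 1 := by
    have hn := hMh.eigenvectorBasis.orthonormal.1 i₀
    have h2 : (inner (𝕜 := ℝ) (hMh.eigenvectorBasis i₀) (hMh.eigenvectorBasis i₀)) = 1 := by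
      rw [real_inner_self_eq_norm_sq, hn]; norm_num
    rw [PiLp.inner_apply] at h2
    simpa [dotProduct, hu, sq] using h2
  set x : Fin d → ℝ := B *ᵥ u with hx
  have hdot_aux : ∀ w : Fin d → ℝ, (B *ᵥ u) ⬝ᵥ w = u ⬝ᵥ (B *ᵥ w) := by
    intro w
    rw [← hBt, mulVec_transpose, ← dotProduct_mulVec, hBt]
  have hx1 : x ⬝ᵥ (N *ᵥ x) = μ := by
    have hNx : N *ᵥ x = μ • (B⁻¹ *ᵥ u) := by
      rw [hx, mulVec_mulVec, hN, mul_assoc, hinvB, mul_one, ← mulVec_mulVec, hMu, mulVec_smul]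
    rw [hNx, hx, dotProduct_smul, hdot_aux, mulVec_mulVec, hBinv, one_mulVec, huu,
      smul_eq_mul, mul_one]
  have hx2 : x ⬝ᵥ x = u ⬝ᵥ (S₀⁻¹ *ᵥ u) := by
    rw [hx, hdot_aux, mulVec_mulVec, hBB]
  have hxx_pos : 0 < x ⬝ᵥ x := by
    rw [hx2]
    have := hSinv.dotProduct_mulVec_pos hune
    simpa using this
  have hxx_le : x ⬝ᵥ x ≤ lS := by
    rw [hx2]
    calc u ⬝ᵥ (S₀⁻¹ *ᵥ u) ≤ lS * (u ⬝ᵥ u) := rayleigh_le _ hS₀.inv.isHermitian u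
      _ = lS := by rw [huu, mul_one]
  have hray : μ ≤ ν * (x ⬝ᵥ x) := by
    rw [← hx1]; exact rayleigh_le N hNh x
  have hνpos : 0 < ν := by
    by_contra h
    push_neg at h
    have : ν * (x ⬝ᵥ x) ≤ 0 := mul_nonpos_of_nonpos_of_nonneg h hxx_pos.le
    linarith
  have hμlS : μ ≤ ν * lS := by
    calc μ ≤ ν * (x ⬝ᵥ x) := hray
      _ ≤ ν * lS := mul_le_mul_of_nonneg_left hxx_le hνpos.le
  refine ⟨ν⁻¹, inv_nonneg.mpr hνpos.le, ?_, ?_⟩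
  · rw [← one_div, div_le_div_iff₀ hνpos hpos]
    linarith
  · obtain ⟨i₁, hi₁⟩ := exists_eq_ciSup_of_finite (f := hNh.eigenvalues)
    set w : Fin d → ℝ := ⇑(hNh.eigenvectorBasis i₁) with hw
    have hNw : N *ᵥ w = ν • w := by rw [hNh.mulVec_eigenvectorBasis, hi₁]
    have hwne : w ≠ 0 := by
      have := hNh.eigenvectorBasis.orthonormal.ne_zero i₁
      intro h; apply this; ext j; exact congrFun h j
    refine (exists_mulVec_eq_zero_iff).mp ⟨B⁻¹ *ᵥ w, ?_, ?_⟩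
    · intro h
      apply hwne
      have : B *ᵥ (B⁻¹ *ᵥ w) = 0 := by rw [h, mulVec_zero]
      rwa [mulVec_mulVec, hBinv, one_mulVec] at this
    · rw [sub_mulVec, smul_mulVec]
      have h1 : S₀⁻¹ *ᵥ (B⁻¹ *ᵥ w) = B *ᵥ w := by
        rw [mulVec_mulVec, ← hBB, mul_assoc, hBinv, mul_one]
      have h2 : M *ᵥ (B⁻¹ *ᵥ w) = ν • (B *ᵥ w) := by
        have : B *ᵥ (N *ᵥ w) = M *ᵥ (B⁻¹ *ᵥ w) := by
          rw [hN, ← mulVec_mulVec, mulVec_mulVec, ← mul_assoc, hBinv, one_mul, mulVec_mulVec]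
        rw [← this, hNw, mulVec_smul]
      rw [h1, h2, smul_smul, inv_mul_cancel₀ hνpos.ne', one_smul, sub_self]
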